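/- arXiv:1909.12570 — 3 statements merged into one kernel-verified Lean document; each statement's English description precedes it below -/
import Mathlib

section
/- Let A be a symmetric invertible p_γ × p_γ real matrix, B a p_γ × p_θ real matrix, and C a symmetric p_θ × p_θ real matrix, and let Ĩ = fromBlocks A B Bᵀ C. Fix vectors γ̂, θ, θ̂ with μ_γ = γ̂ + A⁻¹ B (θ̂ − θ). Let γ be a random vector in ℝ^{p_γ} with square-integrable components, mean μ_γ, and covariance matrix A⁻¹, and let β = (γ, θ), β̂ = (γ̂, θ̂) be the stacked vectors. Then E[(β − β̂)ᵀ Ĩ (β − β̂)] = (θ − θ̂)ᵀ (C − Bᵀ A⁻¹ B) (θ − θ̂) + p_γ. -/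
open MeasureTheory Matrix

private lemma memL2_mul_integrable {Ω : Type*} [MeasurableSpace Ω] {P : Measure Ω}
    {f g : Ω → ℝ} (hf : MemLp f 2 P) (hg : MemLp g 2 P) :
    Integrable (fun ω => f ω * g ω) P := by
  have h := (((hf.add hg).integrable_sq).sub hf.integrable_sq).sub hg.integrable_sq
  have he : (fun ω => f ω * g ω)
      = fun ω => (((f ω + g ω) ^ 2 - f ω ^ 2) - g ω ^ 2) / 2 := by
    funext ω; ring
  rw [he]
  exact h.div_const 2

/-- Equation (si1) of Section SM3: the inner conditional expectation of the
approximate self-information loss quadratic form,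
E[(β − β̂)ᵀ Ĩ (β − β̂)] = (θ − θ̂)ᵀ (C − Bᵀ A⁻¹ B) (θ − θ̂) + p_γ. -/
theorem expected_block_quadratic_form_self_information
    {Ω : Type*} [MeasurableSpace Ω] (P : Measure Ω) [IsProbabilityMeasure P]
    {pγ pθ : ℕ}
    (A : Matrix (Fin pγ) (Fin pγ) ℝ) (hA : A.IsSymm) (hAdet : IsUnit A.det)
    (B : Matrix (Fin pγ) (Fin pθ) ℝ)
    (C : Matrix (Fin pθ) (Fin pθ) ℝ) (hC : C.IsSymm)
    (γhat : Fin pγ → ℝ) (θ θhat : Fin pθ → ℝ)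
    (μγ : Fin pγ → ℝ) (hμγ : μγ = γhat + A⁻¹.mulVec (B.mulVec (θhat - θ)))
    (γ : Ω → (Fin pγ → ℝ)) (hγmeas : Measurable γ)
    (hγL2 : ∀ i, MemLp (fun ω => γ ω i) 2 P)
    (hmean : ∀ i, ∫ ω, γ ω i ∂P = μγ i)
    (hcov : ∀ i j, ∫ ω, (γ ω i - μγ i) * (γ ω j - μγ j) ∂P = A⁻¹ i j) :
    ∫ ω, (Sum.elim (γ ω) θ - Sum.elim γhat θhat) ⬝ᵥ
        (Matrix.fromBlocks A B Bᵀ C).mulVec (Sum.elim (γ ω) θ - Sum.elim γhat θhat) ∂P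
      = (θ - θhat) ⬝ᵥ (C - Bᵀ * A⁻¹ * B).mulVec (θ - θhat) + pγ := by
  classical
  have hA' : Aᵀ = A := hA
  have hAinv : A⁻¹ᵀ = A⁻¹ := by rw [Matrix.transpose_nonsing_inv, hA']
  set d : Fin pθ → ℝ := θ - θhat with hd
  set f : Ω → Fin pγ → ℝ := fun ω => γ ω - γhat with hfdef
  set m : Fin pγ → ℝ := μγ - γhat with hmdef
  -- basic L2 facts
  have hfL2 : ∀ i, MemLp (fun ω => f ω i) 2 P := fun i =>
    (hγL2 i).sub (memLp_const (γhat i))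
  have hfint : ∀ i, Integrable (fun ω => f ω i) P := fun i =>
    (hfL2 i).integrable one_le_two
  have hfmean : ∀ i, ∫ ω, f ω i ∂P = m i := by
    intro i
    have : (fun ω => f ω i) = fun ω => γ ω i - γhat i := rfl
    rw [this, integral_sub ((hγL2 i).integrable one_le_two) (integrable_const _),
      hmean i, integral_const, probReal_univ]
    simp [hmdef]
  have humean : ∀ i, ∫ ω, (γ ω i - μγ i) ∂P = 0 := by
    intro i
    rw [integral_sub ((hγL2 i).integrable one_le_two) (integrable_const _),
      hmean i, integral_const, probReal_univ]
    simp
  have huL2 : ∀ i, MemLp (fun ω => γ ω i - μγ i) 2 P := fun i =>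
    (hγL2 i).sub (memLp_const (μγ i))
  -- key second moment computation
  have key : ∀ i j, ∫ ω, f ω i * f ω j ∂P = A⁻¹ i j + m i * m j := by
    intro i j
    have e : (fun ω => f ω i * f ω j)
        = fun ω => ((γ ω i - μγ i) * (γ ω j - μγ j) + m j * (γ ω i - μγ i))
            + (m i * (γ ω j - μγ j) + m i * m j) := by
      funext ω
      show (γ ω i - γhat i) * (γ ω j - γhat j) = _
      have hmi : m i = μγ i - γhat i := rfl
      have hmj : m j = μγ j - γhat j := rfl
      rw [hmi, hmj]; ring
    have I1 : Integrable (fun ω => (γ ω i - μγ i) * (γ ω j - μγ j)) P :=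
      memL2_mul_integrable (huL2 i) (huL2 j)
    have I2 : Integrable (fun ω => m j * (γ ω i - μγ i)) P :=
      ((huL2 i).integrable one_le_two).const_mul _
    have I3 : Integrable (fun ω => m i * (γ ω j - μγ j)) P :=
      ((huL2 j).integrable one_le_two).const_mul _
    have I12 : Integrable (fun ω => (γ ω i - μγ i) * (γ ω j - μγ j)
        + m j * (γ ω i - μγ i)) P := I1.add I2
    have I34 : Integrable (fun ω => m i * (γ ω j - μγ j) + m i * m j) P :=
      I3.add (integrable_const _)
    rw [e, integral_add I12 I34, integral_add I1 I2,
      integral_add I3 (integrable_const _),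
      hcov i j, integral_const_mul, integral_const_mul, humean i, humean j,
      integral_const, probReal_univ]
    simp
  -- rewrite the quadratic form
  have hsum : ∀ ω : Ω, (Sum.elim (γ ω) θ - Sum.elim γhat θhat) = Sum.elim (f ω) d := by
    intro ω; funext s; cases s <;> simp [hfdef, hd]
  have hquad : ∀ ω : Ω, (Sum.elim (γ ω) θ - Sum.elim γhat θhat) ⬝ᵥ
        (Matrix.fromBlocks A B Bᵀ C).mulVec (Sum.elim (γ ω) θ - Sum.elim γhat θhat)
      = f ω ⬝ᵥ A.mulVec (f ω) + 2 * (f ω ⬝ᵥ B.mulVec d) + d ⬝ᵥ C.mulVec d := by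
    intro ω
    rw [hsum ω, Matrix.fromBlocks_mulVec]
    simp only [Sum.elim_comp_inl, Sum.elim_comp_inr]
    rw [sumElim_dotProduct_sumElim,
      dotProduct_add, dotProduct_add, Matrix.dotProduct_mulVec d Bᵀ (f ω),
      Matrix.vecMul_transpose, dotProduct_comm (B.mulVec d) (f ω)]
    ring
  simp only [hquad]
  -- integrability of the pieces
  have Iij : ∀ i j, Integrable (fun ω => A i j * (f ω i * f ω j)) P := fun i j =>
    (memL2_mul_integrable (hfL2 i) (hfL2 j)).const_mul _
  have eA : ∀ ω : Ω, f ω ⬝ᵥ A.mulVec (f ω) = ∑ i, ∑ j, A i j * (f ω i * f ω j) := by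
    intro ω
    simp only [dotProduct, mulVec, Finset.mul_sum]
    exact Finset.sum_congr rfl fun i _ => Finset.sum_congr rfl fun j _ => by ring
  have IA : Integrable (fun ω => f ω ⬝ᵥ A.mulVec (f ω)) P := by
    simp only [eA]
    exact integrable_finset_sum _ fun i _ => integrable_finset_sum _ fun j _ => Iij i j
  have eB : ∀ ω : Ω, f ω ⬝ᵥ B.mulVec d = ∑ i, f ω i * B.mulVec d i := by
    intro ω; rfl
  have IB : Integrable (fun ω => f ω ⬝ᵥ B.mulVec d) P := by
    simp only [eB]
    exact integrable_finset_sum _ fun i _ => (hfint i).mul_const _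
  -- compute the integrals
  have intA : ∫ ω, f ω ⬝ᵥ A.mulVec (f ω) ∂P
      = ∑ i, ∑ j, A i j * (A⁻¹ i j + m i * m j) := by
    simp only [eA]
    rw [integral_finset_sum _ (fun i _ => integrable_finset_sum _ fun j _ => Iij i j)]
    refine Finset.sum_congr rfl fun i _ => ?_
    rw [integral_finset_sum _ (fun j _ => Iij i j)]
    exact Finset.sum_congr rfl fun j _ => by rw [integral_const_mul, key i j]
  have intB : ∫ ω, f ω ⬝ᵥ B.mulVec d ∂P = m ⬝ᵥ B.mulVec d := by
    simp only [eB]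
    rw [integral_finset_sum _ (fun i _ => (hfint i).mul_const _)]
    exact Finset.sum_congr rfl fun i _ => by rw [integral_mul_const, hfmean i]
  have Imul : Integrable (fun ω => 2 * (f ω ⬝ᵥ B.mulVec d)) P := IB.const_mul 2
  have IAB : Integrable (fun ω => f ω ⬝ᵥ A.mulVec (f ω)
      + 2 * (f ω ⬝ᵥ B.mulVec d)) P := IA.add Imul
  rw [integral_add IAB (integrable_const _),
    integral_add IA Imul, integral_const_mul, intA, intB,
    integral_const, probReal_univ]
  -- now pure algebra
  have split : ∑ i, ∑ j, A i j * (A⁻¹ i j + m i * m j)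
      = (∑ i, ∑ j, A i j * A⁻¹ i j) + (∑ i, ∑ j, A i j * (m i * m j)) := by
    rw [← Finset.sum_add_distrib]
    refine Finset.sum_congr rfl fun i _ => ?_
    rw [← Finset.sum_add_distrib]
    exact Finset.sum_congr rfl fun j _ => by ring
  have trace_eq : ∑ i, ∑ j, A i j * A⁻¹ i j = (pγ : ℝ) := by
    have h1 : ∀ i j : Fin pγ, A⁻¹ i j = A⁻¹ j i := fun i j => by
      conv_lhs => rw [← hAinv]
      rw [Matrix.transpose_apply]
    calc ∑ i, ∑ j, A i j * A⁻¹ i j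
        = ∑ i : Fin pγ, (A * A⁻¹) i i := by
          refine Finset.sum_congr rfl fun i _ => ?_
          rw [Matrix.mul_apply]
          exact Finset.sum_congr rfl fun j _ => by rw [h1 i j]
      _ = Matrix.trace (A * A⁻¹) := rfl
      _ = (pγ : ℝ) := by
          rw [Matrix.mul_nonsing_inv _ hAdet, Matrix.trace_one]
          simp
  have quad_m : ∑ i, ∑ j, A i j * (m i * m j) = m ⬝ᵥ A.mulVec m := by
    simp only [dotProduct, mulVec, Finset.mul_sum]
    exact Finset.sum_congr rfl fun i _ => Finset.sum_congr rfl fun j _ => by ring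
  -- identify m
  set w : Fin pγ → ℝ := B.mulVec (θhat - θ) with hw
  have hm : m = A⁻¹.mulVec w := by
    rw [hmdef, hμγ]; abel
  have hBd : B.mulVec d = -w := by
    rw [hw, hd, ← Matrix.mulVec_neg, neg_sub]
  have hAm : A.mulVec m = w := by
    rw [hm, Matrix.mulVec_mulVec, Matrix.mul_nonsing_inv _ hAdet, Matrix.one_mulVec]
  have hmw : m ⬝ᵥ w = d ⬝ᵥ (Bᵀ * A⁻¹ * B).mulVec d := by
    rw [← Matrix.mulVec_mulVec, ← Matrix.mulVec_mulVec,
      Matrix.dotProduct_mulVec d Bᵀ, Matrix.vecMul_transpose, hBd, hm]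
    rw [Matrix.mulVec_neg, dotProduct_neg, neg_dotProduct, neg_neg,
      dotProduct_comm]
  have halg1 : m ⬝ᵥ A.mulVec m = d ⬝ᵥ (Bᵀ * A⁻¹ * B).mulVec d := by
    rw [hAm, hmw]
  have halg2 : m ⬝ᵥ B.mulVec d = -(d ⬝ᵥ (Bᵀ * A⁻¹ * B).mulVec d) := by
    rw [hBd, dotProduct_neg, hmw]
  have hrhs : d ⬝ᵥ (C - Bᵀ * A⁻¹ * B).mulVec d
      = d ⬝ᵥ C.mulVec d - d ⬝ᵥ (Bᵀ * A⁻¹ * B).mulVec d := by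
    rw [Matrix.sub_mulVec, dotProduct_sub]
  rw [split, trace_eq, quad_m, halg1, halg2, hrhs]
  simp
  ring
end

section
/- Let n, p, q be positive integers, let t : Fin n → Fin q be a surjective map (assigning each of the n runs to one of q treatments), let X be an n × p real matrix with XᵀX invertible whose rows are constant on treatment classes (i.e. t(i) = t(j) implies row i of X equals row j of X), and let Z be the n × q indicator matrix with Z i l = 1 if t(i) = l and 0 otherwise. Then ZᵀZ is invertible and tr(H_X H_Z) = p, where H_X = X (XᵀX)⁻¹ Xᵀ and H_Z = Z (ZᵀZ)⁻¹ Zᵀ. -/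
open Matrix

/-- Section SM5: for the fitted model matrix X with rows constant on treatment
classes and the full-treatment indicator matrix Z, ZᵀZ is invertible and
tr(H_X H_Z) = p, where H_X and H_Z are the corresponding hat matrices. -/
theorem trace_hat_matrices_eq_p
    {n p q : ℕ} (hn : 0 < n) (hp : 0 < p) (hq : 0 < q)
    (t : Fin n → Fin q) (ht : Function.Surjective t)
    (X : Matrix (Fin n) (Fin p) ℝ) (hX : IsUnit (Xᵀ * X).det)
    (hrow : ∀ i j, t i = t j → X i = X j)
    (Z : Matrix (Fin n) (Fin q) ℝ)
    (hZ : ∀ i l, Z i l = if t i = l then 1 else 0) :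
    IsUnit (Zᵀ * Z).det ∧
      ((X * (Xᵀ * X)⁻¹ * Xᵀ) * (Z * (Zᵀ * Z)⁻¹ * Zᵀ)).trace = (p : ℝ) := by
  -- ZᵀZ is diagonal with diagonal entries the class sizes
  set c : Fin q → ℝ := fun l => ((Finset.univ.filter (fun i => t i = l)).card : ℝ) with hc
  have hdiag : Zᵀ * Z = Matrix.diagonal c := by
    ext l m
    simp only [Matrix.mul_apply, Matrix.transpose_apply, Matrix.diagonal_apply, hZ, hc]
    by_cases h : l = m
    · subst h
      simp only [if_pos rfl]
      rw [Finset.card_filter]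
      push_cast
      refine Finset.sum_congr rfl fun i _ => ?_
      by_cases h' : t i = l <;> simp [h']
    · rw [if_neg h]
      refine Finset.sum_eq_zero fun i _ => ?_
      by_cases h1 : t i = l
      · have h2 : t i ≠ m := h1 ▸ h
        simp [h1, h2, h]
      · simp [h1]
  have hcpos : ∀ l, c l ≠ 0 := by
    intro l
    have : (Finset.univ.filter (fun i => t i = l)).Nonempty := by
      obtain ⟨i, hi⟩ := ht l
      exact ⟨i, by simp [hi]⟩
    have := Finset.card_pos.mpr this
    simp only [hc]
    positivity
  have hZdet : IsUnit (Zᵀ * Z).det := by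
    rw [hdiag, Matrix.det_diagonal]
    exact isUnit_iff_ne_zero.mpr (Finset.prod_ne_zero_iff.mpr fun l _ => hcpos l)
  refine ⟨hZdet, ?_⟩
  -- X = Z * W
  set W : Matrix (Fin q) (Fin p) ℝ := fun l => X (Function.surjInv ht l) with hW
  have hXZW : X = Z * W := by
    ext i j
    rw [Matrix.mul_apply]; simp only [hZ, hW]
    rw [Finset.sum_eq_single (t i)]
    · rw [if_pos rfl, one_mul]
      have := hrow i (Function.surjInv ht (t i)) (Function.surjInv_eq ht (t i)).symm
      rw [this]
    · intro l _ hl; rw [if_neg (Ne.symm hl), zero_mul]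
    · intro h; exact absurd (Finset.mem_univ _) h
  -- H_Z * X = X
  have hHZX : (Z * (Zᵀ * Z)⁻¹ * Zᵀ) * X = X := by
    conv_lhs => rw [hXZW]
    rw [Matrix.mul_assoc (Z * (Zᵀ * Z)⁻¹), ← Matrix.mul_assoc Zᵀ Z W,
      ← Matrix.mul_assoc, Matrix.mul_assoc Z, Matrix.nonsing_inv_mul _ hZdet,
      Matrix.mul_one, ← hXZW]
  calc ((X * (Xᵀ * X)⁻¹ * Xᵀ) * (Z * (Zᵀ * Z)⁻¹ * Zᵀ)).trace
      = ((Z * (Zᵀ * Z)⁻¹ * Zᵀ) * (X * (Xᵀ * X)⁻¹ * Xᵀ)).trace := Matrix.trace_mul_comm _ _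
    _ = (X * (Xᵀ * X)⁻¹ * Xᵀ).trace := by
        congr 1
        simp only [← Matrix.mul_assoc]
        rw [hHZX]
    _ = (Xᵀ * (X * (Xᵀ * X)⁻¹)).trace := Matrix.trace_mul_comm _ _
    _ = ((Xᵀ * X) * (Xᵀ * X)⁻¹).trace := by rw [← Matrix.mul_assoc]
    _ = (1 : Matrix (Fin p) (Fin p) ℝ).trace := by rw [Matrix.mul_nonsing_inv _ hX]
    _ = (p : ℝ) := by simp
end

section
/- Let n, p, q be positive integers, let t : Fin n → Fin q be a surjective map, let X be an n × p real matrix with XᵀX invertible whose rows are constant on treatment classes (t(i) = t(j) implies row i of X equals row j of X), let Z be the n × q indicator matrix with Z i l = 1 if t(i) = l and 0 otherwise, and let κ be a real number. Then tr[(I_n − H_X)(I_n + κ H_Z)] = (1 + κ)(n − p) − κ(n − q), where H_X = X (XᵀX)⁻¹ Xᵀ and H_Z = Z (ZᵀZ)⁻¹ Zᵀ. -/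
open Matrix

section Aux

variable {n q : ℕ} (t : Fin n → Fin q) (Z : Matrix (Fin n) (Fin q) ℝ)

lemma aux_ZtZ (hZ : ∀ i l, Z i l = if t i = l then 1 else 0) :
    Zᵀ * Z = Matrix.diagonal (fun l => ((Finset.univ.filter (fun i => t i = l)).card : ℝ)) := by
  ext l m
  simp only [Matrix.mul_apply, Matrix.transpose_apply, Matrix.diagonal_apply, hZ]
  by_cases h : l = m
  · subst h
    simp only [if_pos rfl]
    rw [Finset.card_filter]
    push_cast
    apply Finset.sum_congr rfl
    intro i _
    by_cases hi : t i = l <;> simp [hi]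
  · rw [if_neg h]
    apply Finset.sum_eq_zero
    intro i _
    by_cases hi : t i = l
    · have hm : t i ≠ m := fun hm => h (hi ▸ hm)
      simp [hi, hm]
      exact h
    · simp [hi]

end Aux

/-- Section SM5: tr[(I_n − H_X)(I_n + κ H_Z)] = (1 + κ)(n − p) − κ(n − q),
for hat matrices H_X, H_Z of the fitted regression model matrix X (rows
constant on treatment classes) and the full-treatment indicator matrix Z. -/
theorem trace_residual_projection_identity
    {n p q : ℕ} (hn : 0 < n) (hp : 0 < p) (hq : 0 < q)
    (t : Fin n → Fin q) (ht : Function.Surjective t)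
    (X : Matrix (Fin n) (Fin p) ℝ) (hX : IsUnit (Xᵀ * X).det)
    (hrow : ∀ i j, t i = t j → X i = X j)
    (Z : Matrix (Fin n) (Fin q) ℝ)
    (hZ : ∀ i l, Z i l = if t i = l then 1 else 0)
    (κ : ℝ) :
    (((1 : Matrix (Fin n) (Fin n) ℝ) - X * (Xᵀ * X)⁻¹ * Xᵀ)
        * ((1 : Matrix (Fin n) (Fin n) ℝ) + κ • (Z * (Zᵀ * Z)⁻¹ * Zᵀ))).trace
      = (1 + κ) * ((n : ℝ) - p) - κ * ((n : ℝ) - q) := by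
  set c : Fin q → ℝ := fun l => ((Finset.univ.filter (fun i => t i = l)).card : ℝ) with hc
  have hZtZ : Zᵀ * Z = Matrix.diagonal c := aux_ZtZ t Z hZ
  have hcpos : ∀ l, c l ≠ 0 := by
    intro l
    obtain ⟨i, hi⟩ := ht l
    have : i ∈ Finset.univ.filter (fun i => t i = l) := by simp [hi]
    simp only [hc, Nat.cast_ne_zero]
    exact Finset.card_ne_zero_of_mem this
  have hdetZ : IsUnit (Zᵀ * Z).det := by
    rw [hZtZ, Matrix.det_diagonal]
    exact isUnit_iff_ne_zero.mpr (Finset.prod_ne_zero_iff.mpr fun l _ => hcpos l)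
  have hinvZ : (Zᵀ * Z)⁻¹ = Matrix.diagonal (fun l => (c l)⁻¹) := by
    rw [hZtZ]
    apply Matrix.inv_eq_right_inv
    rw [Matrix.diagonal_mul_diagonal]
    ext i j
    rcases eq_or_ne i j with h | h
    · subst h; simp [Matrix.diagonal_apply, mul_inv_cancel₀ (hcpos i)]
    · simp [Matrix.diagonal_apply, Matrix.one_apply, h]
  -- entry formula for H_Z
  have hent : ∀ i j, (Z * (Zᵀ * Z)⁻¹ * Zᵀ) i j
      = if t j = t i then (c (t i))⁻¹ else 0 := by
    intro i j
    rw [hinvZ]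
    simp only [Matrix.mul_apply, Matrix.mul_diagonal, Matrix.transpose_apply, hZ]
    rw [Finset.sum_eq_single (t i)]
    · by_cases h : t j = t i <;> simp [h]
    · intro l _ hl
      simp [Ne.symm hl]
    · simp
  have hHZX : Z * (Zᵀ * Z)⁻¹ * Zᵀ * X = X := by
    ext i k
    rw [Matrix.mul_apply]
    have step : ∀ j, (Z * (Zᵀ * Z)⁻¹ * Zᵀ) i j * X j k
        = if t j = t i then (c (t i))⁻¹ * X i k else 0 := by
      intro j
      rw [hent]
      by_cases h : t j = t i
      · simp [h, congrFun (hrow j i h) k]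
      · simp [h]
    simp only [step]
    rw [Finset.sum_ite, Finset.sum_const, Finset.sum_const_zero, add_zero, nsmul_eq_mul]
    have hcard : ((Finset.univ.filter (fun j => t j = t i)).card : ℝ) = c (t i) := rfl
    rw [hcard, ← mul_assoc, mul_inv_cancel₀ (hcpos (t i)), one_mul]
  have trHX : (X * (Xᵀ * X)⁻¹ * Xᵀ).trace = (p : ℝ) := by
    rw [Matrix.trace_mul_cycle, Matrix.mul_nonsing_inv _ hX, Matrix.trace_one]
    simp
  have trHZ : (Z * (Zᵀ * Z)⁻¹ * Zᵀ).trace = (q : ℝ) := by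
    rw [Matrix.trace_mul_cycle, Matrix.mul_nonsing_inv _ hdetZ, Matrix.trace_one]
    simp
  have trHXHZ : ((X * (Xᵀ * X)⁻¹ * Xᵀ) * (Z * (Zᵀ * Z)⁻¹ * Zᵀ)).trace = (p : ℝ) := by
    rw [Matrix.trace_mul_comm]
    have key : (Z * (Zᵀ * Z)⁻¹ * Zᵀ) * (X * (Xᵀ * X)⁻¹ * Xᵀ)
        = (Z * (Zᵀ * Z)⁻¹ * Zᵀ * X) * ((Xᵀ * X)⁻¹ * Xᵀ) := by
      simp only [Matrix.mul_assoc]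
    rw [key, hHZX, ← Matrix.mul_assoc, trHX]
  rw [Matrix.sub_mul, Matrix.mul_add, Matrix.mul_add, Matrix.one_mul, Matrix.one_mul,
    Matrix.mul_smul, Matrix.mul_one]
  rw [Matrix.trace_sub, Matrix.trace_add, Matrix.trace_add, Matrix.trace_one,
    Matrix.trace_smul, Matrix.trace_smul, trHX, trHZ, trHXHZ]
  simp only [Fintype.card_fin, smul_eq_mul]
  ring
end
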